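/- For every w ∈ X with |e*(w)| ≤ (1 − ρ)‖w‖, it holds that ‖w‖_α = ‖w‖. In particular, if ‖w‖ = 1 and |e*(w)| ≤ 1 − ρ, then ‖w‖_α = 1. -/
import Mathlib


open Filter Topology Set Pointwise

theorem statement14 {X : Type*} [NormedAddCommGroup X] [NormedSpace ℝ X] [CompleteSpace X]
    (ρ t : ℝ) (hρ0 : 0 < ρ) (hρ1 : ρ < 1 / 4) (ht0 : 0 < t) (ht1 : t < ρ / 16)
    (v e h : X) (hv : ‖v‖ = 1) (he : ‖e‖ = 1) (hh : ‖h‖ = 1)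
    (vs es hs : X →L[ℝ] ℝ) (hvs : ‖vs‖ = 1) (hes : ‖es‖ = 1) (hhs : ‖hs‖ = 1)
    (hvv : vs v = 1) (hee : es e = 1) (hhh : hs h = 1) (heh : |es h| < ρ / 800)
    (xp xm yp ym : X)
    (hxp : xp = (1 - ρ / 2) • e + t • h) (hxm : xm = (1 - ρ / 2) • e - t • h)
    (hyp : yp = xp + (ρ / 4) • v) (hym : ym = xm - (ρ / 4) • v)
    (BX SA BA : Set X)
    (hBX : BX = Metric.closedBall (0 : X) 1)
    (hSA : SA = {x ∈ BX | 1 - ρ < es x})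
    (hBA : BA = closure (convexHull ℝ ((BX \ (SA ∪ Neg.neg '' SA)) ∪ {yp, ym, -yp, -ym})))
    :
    (∀ w : X, |es w| ≤ (1 - ρ) * ‖w‖ → gauge BA w = ‖w‖) ∧
    (∀ w : X, ‖w‖ = 1 → |es w| ≤ 1 - ρ → gauge BA w = 1) := by
  have hes_le : ∀ x : X, |es x| ≤ ‖x‖ := by
    intro x
    calc |es x| = ‖es x‖ := rfl
      _ ≤ ‖es‖ * ‖x‖ := es.le_opNorm x
      _ = ‖x‖ := by rw [hes, one_mul]
  -- core membership: any x with ‖x‖ ≤ 1 and |es x| ≤ 1 - ρ is in BA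
  have hmem : ∀ x : X, ‖x‖ ≤ 1 → |es x| ≤ 1 - ρ → x ∈ BA := by
    intro x hx1 hx2
    rw [hBA]
    apply subset_closure
    apply subset_convexHull
    left
    constructor
    · rw [hBX]; simpa using hx1
    · intro hmem
      rcases hmem with h1 | h1
      · rw [hSA] at h1
        have := h1.2
        have : es x ≤ 1 - ρ := le_trans (le_abs_self _) hx2
        linarith [h1.2]
      · rcases h1 with ⟨y, hy, hyx⟩
        rw [hSA] at hy
        have h2 : es y = - es x := by
          have : es (-x) = - es x := map_neg es x
          rw [← hyx] at hx2 ⊢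
          simp [map_neg]
        have : es y ≤ 1 - ρ := by
          rw [h2]
          calc -es x ≤ |es x| := neg_le_abs _
            _ ≤ 1 - ρ := hx2
        linarith [hy.2]
  -- BA ⊆ closed unit ball
  have hyp_norm : ‖yp‖ ≤ 1 := by
    rw [hyp, hxp]
    calc ‖(1 - ρ / 2) • e + t • h + (ρ / 4) • v‖
        ≤ ‖(1 - ρ / 2) • e‖ + ‖t • h‖ + ‖(ρ / 4) • v‖ := norm_add₃_le
      _ = |1 - ρ / 2| * 1 + |t| * 1 + |ρ / 4| * 1 := by
          rw [norm_smul, norm_smul, norm_smul, he, hh, hv]; rfl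
      _ = |1 - ρ / 2| + |t| + |ρ / 4| := by ring
      _ ≤ 1 := by
          rw [abs_of_pos (by linarith), abs_of_pos ht0, abs_of_pos (by linarith)]
          linarith
  have hym_norm : ‖ym‖ ≤ 1 := by
    rw [hym, hxm]
    calc ‖(1 - ρ / 2) • e - t • h - (ρ / 4) • v‖
        ≤ ‖(1 - ρ / 2) • e - t • h‖ + ‖(ρ / 4) • v‖ := norm_sub_le _ _
      _ ≤ ‖(1 - ρ / 2) • e‖ + ‖t • h‖ + ‖(ρ / 4) • v‖ := by
          gcongr; exact norm_sub_le _ _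
      _ = |1 - ρ / 2| * 1 + |t| * 1 + |ρ / 4| * 1 := by
          rw [norm_smul, norm_smul, norm_smul, he, hh, hv]; rfl
      _ = |1 - ρ / 2| + |t| + |ρ / 4| := by ring
      _ ≤ 1 := by
          rw [abs_of_pos (by linarith), abs_of_pos ht0, abs_of_pos (by linarith)]
          linarith
  have hBA_sub : BA ⊆ Metric.closedBall (0 : X) 1 := by
    rw [hBA]
    apply closure_minimal _ Metric.isClosed_closedBall
    apply convexHull_min _ (convex_closedBall _ _)
    rintro x (hx | hx)
    · rw [hBX] at hx; exact hx.1
    · simp only [mem_insert_iff, mem_singleton_iff] at hx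
      rcases hx with rfl | rfl | rfl | rfl <;>
        simp only [Metric.mem_closedBall, dist_zero_right, norm_neg] <;> assumption
  -- absorbency of BA
  have habs : Absorbent ℝ BA := by
    have hsub : Metric.ball (0 : X) (1 - ρ) ⊆ BA := by
      intro x hx
      simp only [Metric.mem_ball, dist_zero_right] at hx
      exact hmem x (by linarith) (le_of_lt (lt_of_le_of_lt (hes_le x) hx))
    exact (absorbent_ball_zero (by linarith)).mono hsub
  have key : ∀ w : X, |es w| ≤ (1 - ρ) * ‖w‖ → gauge BA w = ‖w‖ := by
    intro w hw
    rcases eq_or_ne w 0 with rfl | hw0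
    · simp [gauge_zero]
    have hwn : 0 < ‖w‖ := norm_pos_iff.mpr hw0
    apply le_antisymm
    · -- gauge BA w ≤ ‖w‖
      have hu : (‖w‖⁻¹ • w) ∈ BA := by
        apply hmem
        · rw [norm_smul, norm_inv, norm_norm, inv_mul_cancel₀ hwn.ne']
        · rw [map_smul, smul_eq_mul, abs_mul, abs_inv, abs_norm]
          rw [inv_mul_le_iff₀ hwn]
          calc |es w| ≤ (1 - ρ) * ‖w‖ := hw
            _ = ‖w‖ * (1 - ρ) := by ring
      have : w ∈ ‖w‖ • BA := by
        refine ⟨‖w‖⁻¹ • w, hu, ?_⟩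
        simp [smul_smul, mul_inv_cancel₀ hwn.ne']
      exact gauge_le_of_mem (norm_nonneg w) this
    · -- ‖w‖ ≤ gauge BA w
      have := le_gauge_of_subset_closedBall habs zero_le_one hBA_sub (x := w)
      simpa using this
  refine ⟨key, fun w hw1 hw2 => ?_⟩
  rw [← hw1]
  exact key w (by rw [hw1, mul_one]; exact hw2)
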